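/- Spectral gap of the Grover interpolation: for H(s) = (1−s)(I − |φ⟩⟨φ|) + s(I − |m⟩⟨m|) on ℂⁿ, restricted to the 2-dimensional subspace spanned by |φ⟩ and |m⟩, the two eigenvalues λ₋(s) ≤ λ₊(s) satisfy λ₊(s) − λ₋(s) = √(1 − 4s(1−s)(1 − 1/n)), and in particular the minimum gap over s ∈ [0,1] is 1/√n, attained at s = 1/2. -/

import Mathlib

/-- For `H(s) = (1−s)(I − |φ⟩⟨φ|) + s(I − |m⟩⟨m|)` restricted to the
invariant 2-dimensional subspace spanned by `|φ⟩` and `|m⟩`, the two eigenvalues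
`λ₋(s) ≤ λ₊(s)` satisfy `λ₊(s) − λ₋(s) = √(1 − 4s(1−s)(1 − 1/n))`; the minimum gap
over `s ∈ [0,1]` is `1/√n`, attained at `s = 1/2`. -/
theorem stmt11 (n : ℕ) (hn : 2 ≤ n) (m : Fin n)
    (φ em : Fin n → ℂ)
    (hφ : φ = fun _ => (((Real.sqrt n)⁻¹ : ℝ) : ℂ))
    (hem : em = (Pi.single m 1 : Fin n → ℂ))
    (H : ℝ → Matrix (Fin n) (Fin n) ℂ)
    (hH : ∀ s, H s = ((1 - s : ℝ) : ℂ) • (1 - Matrix.vecMulVec φ (star φ))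
        + ((s : ℝ) : ℂ) • (1 - Matrix.single m m (1 : ℂ))) :
    ∀ s ∈ Set.Icc (0 : ℝ) 1,
      ∃ lm lp : ℝ, lm ≤ lp ∧
        (∃ v : Fin n → ℂ, v ≠ 0 ∧ v ∈ Submodule.span ℂ {φ, em} ∧
          (H s).mulVec v = (lm : ℂ) • v) ∧
        (∃ v : Fin n → ℂ, v ≠ 0 ∧ v ∈ Submodule.span ℂ {φ, em} ∧
          (H s).mulVec v = (lp : ℂ) • v) ∧
        lp - lm = Real.sqrt (1 - 4 * s * (1 - s) * (1 - 1 / n)) ∧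
        1 / Real.sqrt n ≤ lp - lm ∧
        (s = 1 / 2 → lp - lm = 1 / Real.sqrt n) := by
  intro s hs
  obtain ⟨hs0, hs1⟩ := hs
  have hn0 : (0:ℝ) < n := by positivity
  have hn2 : (2:ℝ) ≤ n := by exact_mod_cast hn
  set a : ℝ := (Real.sqrt n)⁻¹ with ha_def
  have hsq : Real.sqrt n * Real.sqrt n = n := Real.mul_self_sqrt (by positivity)
  have ha_pos : 0 < a := by
    have : 0 < Real.sqrt n := Real.sqrt_pos.mpr hn0
    positivity
  have haa : a * a = 1 / n := by
    rw [ha_def, ← mul_inv, hsq, one_div]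
  have hnaa : (n:ℝ) * (a*a) = 1 := by rw [haa]; field_simp
  -- the four basic matrix-vector products
  have l1 : (Matrix.vecMulVec φ (star φ)).mulVec φ = φ := by
    funext i
    simp only [hφ, Matrix.mulVec, dotProduct, Matrix.vecMulVec_apply, Pi.star_apply,
      Complex.star_def, Complex.conj_ofReal, Finset.sum_const, Finset.card_univ,
      Fintype.card_fin, nsmul_eq_mul]
    rw [← Complex.ofReal_natCast]
    rw [show ((n:ℝ):ℂ) * ((a:ℂ) * (a:ℂ) * (a:ℂ)) = (((n:ℝ) * (a*a) : ℝ):ℂ) * (a:ℂ) by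
      push_cast; ring, hnaa]
    simp
  have l2 : (Matrix.vecMulVec φ (star φ)).mulVec em = ((a:ℝ):ℂ) • φ := by
    funext i
    simp [hφ, hem, Matrix.mulVec, dotProduct, Matrix.vecMulVec_apply,
      Complex.conj_ofReal, Pi.single_apply]
  have l3 : (Matrix.single m m (1:ℂ)).mulVec φ = ((a:ℝ):ℂ) • em := by
    funext i
    simp only [hφ, hem, Matrix.mulVec, dotProduct, Matrix.single,
      Matrix.of_apply, Pi.smul_apply, Pi.single_apply, smul_eq_mul, ite_mul, zero_mul,
      mul_ite, mul_zero, mul_one]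
    by_cases him : m = i <;> simp [him, eq_comm]
  have l4 : (Matrix.single m m (1:ℂ)).mulVec em = em := by
    funext i
    simp only [hem, Matrix.mulVec, dotProduct, Matrix.single,
      Matrix.of_apply, Pi.single_apply, mul_ite, mul_zero, mul_one]
    by_cases him : m = i <;> simp [him, eq_comm]
  -- action of H s on φ and em
  have hHφ : (H s).mulVec φ = ((s:ℝ):ℂ) • φ - (((s*a:ℝ)):ℂ) • em := by
    rw [hH, Matrix.add_mulVec, Matrix.smul_mulVec, Matrix.smul_mulVec,
      Matrix.sub_mulVec, Matrix.sub_mulVec, Matrix.one_mulVec, l1, l3]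
    push_cast
    module
  have hHem : (H s).mulVec em = (((1-s:ℝ)):ℂ) • em - (((1-s)*a:ℝ):ℂ) • φ := by
    rw [hH, Matrix.add_mulVec, Matrix.smul_mulVec, Matrix.smul_mulVec,
      Matrix.sub_mulVec, Matrix.sub_mulVec, Matrix.one_mulVec, l2, l4]
    push_cast
    module
  -- weak linear independence of φ and em
  obtain ⟨i0, hi0⟩ : ∃ i : Fin n, i ≠ m := by
    have : 1 < Fintype.card (Fin n) := by simp; omega
    exact Fintype.exists_ne_of_one_lt_card this m
  have haC : ((a:ℝ):ℂ) ≠ 0 := by exact_mod_cast ha_pos.ne'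
  have hli : ∀ α β : ℂ, α • φ + β • em = 0 → α = 0 ∧ β = 0 := by
    intro α β h
    have hi : α * ((a:ℝ):ℂ) = 0 := by
      have := congrFun h i0
      simpa [hφ, hem, Pi.single_apply, hi0] using this
    have hα : α = 0 := by
      rcases mul_eq_zero.mp hi with h' | h'
      · exact h'
      · exact absurd h' haC
    have hβ : β = 0 := by
      have := congrFun h m
      simpa [hφ, hem, Pi.single_apply, hα] using this
    exact ⟨hα, hβ⟩
  -- the eigenvector constructor
  have hvec : ∀ (α β lam : ℝ), ¬(α = 0 ∧ β = 0) →
      (α*s - β*(1-s)*a = lam*α) → (-(α*s*a) + β*(1-s) = lam*β) →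
      ∃ v : Fin n → ℂ, v ≠ 0 ∧ v ∈ Submodule.span ℂ {φ, em} ∧
        (H s).mulVec v = (lam:ℂ) • v := by
    intro α β lam hne h1 h2
    refine ⟨(α:ℂ) • φ + (β:ℂ) • em, ?_, ?_, ?_⟩
    · intro h0
      obtain ⟨hA, hB⟩ := hli _ _ h0
      exact hne ⟨by exact_mod_cast hA, by exact_mod_cast hB⟩
    · exact Submodule.add_mem _
        (Submodule.smul_mem _ _ (Submodule.subset_span (by simp)))
        (Submodule.smul_mem _ _ (Submodule.subset_span (by simp)))
    · rw [Matrix.mulVec_add, Matrix.mulVec_smul, Matrix.mulVec_smul, hHφ, hHem]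
      have h1' : (α:ℂ)*(s:ℂ) - (β:ℂ)*(1-(s:ℂ))*(a:ℂ) = (lam:ℂ)*(α:ℂ) := by exact_mod_cast h1
      have h2' : -((α:ℂ)*(s:ℂ)*(a:ℂ)) + (β:ℂ)*(1-(s:ℂ)) = (lam:ℂ)*(β:ℂ) := by exact_mod_cast h2
      match_scalars
      · push_cast; linear_combination h1'
      · push_cast; linear_combination h2'
  -- eigenvalue arithmetic
  set R : ℝ := 1 - 4*s*(1-s)*(1-1/n) with hR_def
  have h1n : (0:ℝ) < 1/n := by positivity
  have h1n1 : (1:ℝ)/n ≤ 1 := by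
    rw [div_le_one hn0]; linarith
  have hR0 : 0 ≤ R := by
    rw [hR_def]
    nlinarith [sq_nonneg (1-2*s), mul_nonneg (mul_nonneg hs0 (by linarith : (0:ℝ) ≤ 1-s)) h1n.le]
  set D : ℝ := Real.sqrt R with hD_def
  have hD2 : D*D = R := Real.mul_self_sqrt hR0
  have hD0 : 0 ≤ D := Real.sqrt_nonneg _
  set lm : ℝ := (1-D)/2 with hlm_def
  set lp : ℝ := (1+D)/2 with hlp_def
  have hq_lm : lm*lm - lm + s*(1-s)*(1-a*a) = 0 := by
    rw [hlm_def]; linear_combination hD2/4 - s*(1-s)*haa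
  have hq_lp : lp*lp - lp + s*(1-s)*(1-a*a) = 0 := by
    rw [hlp_def]; linear_combination hD2/4 - s*(1-s)*haa
  have hgap : lp - lm = D := by rw [hlp_def, hlm_def]; ring
  -- existence of the two eigenvectors
  have ex_m : ∃ v : Fin n → ℂ, v ≠ 0 ∧ v ∈ Submodule.span ℂ {φ, em} ∧
      (H s).mulVec v = (lm:ℂ) • v := by
    refine hvec ((1-s)*a) (s-lm) lm ?_ (by ring) (by linear_combination hq_lm)
    rintro ⟨hA, hB⟩
    rcases eq_or_lt_of_le hs1 with hseq | hslt
    · -- s = 1 : then R = 1, D = 1, lm = 0 and β = 1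
      have hR1 : R = 1 := by rw [hR_def, hseq]; ring
      have hD1 : D = 1 := by rw [hD_def, hR1, Real.sqrt_one]
      have : s - lm = 1 := by rw [hlm_def, hD1, hseq]; ring
      rw [hB] at this; norm_num at this
    · have : (1-s)*a > 0 := mul_pos (by linarith) ha_pos
      rw [hA] at this; norm_num at this
  have ex_p : ∃ v : Fin n → ℂ, v ≠ 0 ∧ v ∈ Submodule.span ℂ {φ, em} ∧
      (H s).mulVec v = (lp:ℂ) • v := by
    rcases eq_or_lt_of_le hs1 with hseq | hslt
    · -- s = 1 : lp = 1, eigenvector φ - a • em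
      have hR1 : R = 1 := by rw [hR_def, hseq]; ring
      have hD1 : D = 1 := by rw [hD_def, hR1, Real.sqrt_one]
      have hlp1 : lp = 1 := by rw [hlp_def, hD1]; norm_num
      refine hvec 1 (-a) lp ?_ ?_ ?_
      · rintro ⟨hA, _⟩; norm_num at hA
      · rw [hseq, hlp1]; ring
      · rw [hseq, hlp1]; ring
    · refine hvec ((1-s)*a) (s-lp) lp ?_ (by ring) (by linear_combination hq_lp)
      rintro ⟨hA, hB⟩
      have : (1-s)*a > 0 := mul_pos (by linarith) ha_pos
      rw [hA] at this; norm_num at this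
  refine ⟨lm, lp, by rw [hlm_def, hlp_def]; linarith, ex_m, ex_p, ?_, ?_, ?_⟩
  · rw [hgap, hD_def, hR_def]
  · rw [hgap, hD_def]
    have h1 : (1:ℝ)/Real.sqrt n = Real.sqrt (1/n) := by
      rw [one_div, one_div, Real.sqrt_inv]
    rw [h1]
    apply Real.sqrt_le_sqrt
    rw [hR_def]
    nlinarith [sq_nonneg (1-2*s)]
  · intro hs_half
    rw [hgap, hD_def, hR_def, hs_half,
      show (1:ℝ) - 4*(1/2)*(1-1/2)*(1-1/n) = 1/n by ring,
      one_div, one_div, Real.sqrt_inv]
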